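/- Let M be a commutative binoid and K an integral domain. Precomposition with the canonical quotient map M → M_red is a bijection from MonoidWithZeroHom M_red K to MonoidWithZeroHom M K. -/

import Mathlib

/-- The Rees congruence on a binoid by an ideal `I`:
`a ~ b` iff `a = b` or both `a, b ∈ I`. -/
def reesCon {M : Type*} [CommMonoidWithZero M] (I : Set M)
    (hI : ∀ a ∈ I, ∀ m : M, a * m ∈ I) : Con M where
  r a b := a = b ∨ (a ∈ I ∧ b ∈ I)
  iseqv := by
    refine ⟨fun _ => Or.inl rfl, ?_, ?_⟩
    · rintro a b (rfl | h)
      · exact Or.inl rfl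
      · exact Or.inr ⟨h.2, h.1⟩
    · rintro a b c (rfl | h1) (rfl | h2)
      · exact Or.inl rfl
      · exact Or.inr h2
      · exact Or.inr h1
      · exact Or.inr ⟨h1.1, h2.2⟩
  mul' := by
    rintro a b c d (rfl | h1) (rfl | h2)
    · exact Or.inl rfl
    · exact Or.inr ⟨by rw [mul_comm]; exact hI _ h2.1 a, by rw [mul_comm]; exact hI _ h2.2 a⟩
    · exact Or.inr ⟨hI _ h1.1 _, hI _ h1.2 _⟩
    · exact Or.inr ⟨hI _ h1.1 _, hI _ h1.2 _⟩
/-- The set (ideal) of nilpotent elements of a binoid. -/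
def nilSet (M : Type*) [CommMonoidWithZero M] : Set M := {a | ∃ n : ℕ, 1 ≤ n ∧ a ^ n = 0}

/-- The Rees congruence by the ideal of nilpotent elements; its quotient is `M_red`. -/
def reesConNil (M : Type*) [CommMonoidWithZero M] : Con M :=
  reesCon (nilSet M) (by
    rintro a ⟨n, hn, h⟩ m
    exact ⟨n, hn, by rw [mul_pow, h, zero_mul]⟩)
/-- The quotient of a commutative binoid by a congruence is again a binoid,
with zero the class of `0`. -/
instance conQuotCMWZ {M : Type*} [CommMonoidWithZero M] (c : Con M) :
    CommMonoidWithZero c.Quotient where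
  __ := (inferInstance : CommMonoid c.Quotient)
  zero := c.mk' 0
  zero_mul a := Con.induction_on a fun x => by
    show c.mk' 0 * c.mk' x = c.mk' 0
    rw [← map_mul, zero_mul]
  mul_zero a := Con.induction_on a fun x => by
    show c.mk' x * c.mk' 0 = c.mk' 0
    rw [← map_mul, mul_zero]

/-- The Rees quotient map `M → M_red`, as a binoid homomorphism. -/
def redHom (M : Type*) [CommMonoidWithZero M] : MonoidWithZeroHom M (reesConNil M).Quotient :=
  { (reesConNil M).mk' with map_zero' := rfl }

/-- Let `M` be a commutative binoid and `K` an integral domain.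
Precomposition with the canonical quotient map `M → M_red` is a bijection from
`MonoidWithZeroHom M_red K` to `MonoidWithZeroHom M K`. -/
theorem red_precomp_bijective {M K : Type*} [CommMonoidWithZero M] [CommRing K] [IsDomain K] :
    Function.Bijective
      (fun φ : MonoidWithZeroHom (reesConNil M).Quotient K => φ.comp (redHom M)) := by
  constructor
  · intro φ ψ h
    ext x
    induction x using Con.induction_on with
    | _ m => exact DFunLike.congr_fun h m
  · intro f
    have hle : reesConNil M ≤ Con.ker f.toMonoidHom := by
      rintro a b (rfl | ⟨⟨n, hn, ha⟩, ⟨k, hk, hb⟩⟩)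
      · rfl
      · have h1 : f a = 0 := by
          have : (f a) ^ n = 0 := by rw [← map_pow, ha, map_zero]
          exact pow_eq_zero_iff (Nat.one_le_iff_ne_zero.mp hn) |>.mp this
        have h2 : f b = 0 := by
          have : (f b) ^ k = 0 := by rw [← map_pow, hb, map_zero]
          exact pow_eq_zero_iff (Nat.one_le_iff_ne_zero.mp hk) |>.mp this
        show f a = f b
        rw [h1, h2]
    refine ⟨{ Con.lift _ f.toMonoidHom hle with map_zero' := ?_ }, ?_⟩
    · show (Con.lift _ f.toMonoidHom hle) ((reesConNil M).mk' 0) = 0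
      simp
    · ext m
      rfl
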